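/- Let h₁, ..., h_m : S → ℝ be functions on a set S, and let K denote the set of finitely-supported probability measures μ on S with ∫ hᵢ dμ = 0 for i = 1,...,m. Let K_j ⊆ K be those measures supported on at most j points. Then for any quasiconvex function g : K → ℝ, sup_{μ ∈ K} g(μ) = sup_{μ ∈ K_{m+1}} g(μ) (with sup over the empty set interpreted as 0). -/

import Mathlib

open Finset

/-- Linearity of the constraint sums. -/
lemma stmt12.sum_lin {S : Type*} (c : S → ℝ) (μ τ : S →₀ ℝ) (t : ℝ) :
    ((μ + t • τ).sum fun s p => p * c s)
      = (μ.sum fun s p => p * c s) + t * (τ.sum fun s p => p * c s) := by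
  rw [Finsupp.sum_add_index' (by simp) (by intro a b₁ b₂; ring),
    Finsupp.sum_smul_index' (by simp), Finsupp.mul_sum]
  congr 1
  apply Finsupp.sum_congr
  intro s _
  simp [smul_eq_mul]; ring

/-- Existence of a nonzero "direction" τ supported in μ.support annihilating all
m+1 linear constraints, when the support is large. -/
lemma stmt12.exists_rel {S : Type*} (m : ℕ) (h : Fin m → S → ℝ) (μ : S →₀ ℝ)
    (hcard : m + 1 < μ.support.card) :
    ∃ τ : S →₀ ℝ, τ ≠ 0 ∧ τ.support ⊆ μ.support ∧
      (τ.sum fun _ p => p) = 0 ∧ ∀ i : Fin m, (τ.sum fun s p => p * h i s) = 0 := by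
  classical
  set c : Fin (m + 1) → S → ℝ := Fin.cases (fun _ => 1) h with hc
  let L : ((↥μ.support : Type _) → ℝ) →ₗ[ℝ] (Fin (m + 1) → ℝ) :=
    { toFun := fun v i => ∑ s : ↥μ.support, v s * c i (s : S)
      map_add' := by
        intro v w; funext i; simp [add_mul, Finset.sum_add_distrib]
      map_smul' := by
        intro a v; funext i; simp [Finset.mul_sum, mul_assoc] }
  have hnotinj : ¬ Function.Injective L := by
    intro hinj
    have h1 := LinearMap.finrank_le_finrank_of_injective hinj
    rw [Module.finrank_fintype_fun_eq_card, Module.finrank_fintype_fun_eq_card] at h1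
    simp [Fintype.card_coe, Fintype.card_fin] at h1
    omega
  rw [Function.not_injective_iff] at hnotinj
  obtain ⟨v, w, hvw, hne⟩ := hnotinj
  set u : (↥μ.support : Type _) → ℝ := v - w with hu
  have hLu : L u = 0 := by rw [hu, map_sub, hvw, sub_self]
  have hune : u ≠ 0 := sub_ne_zero.2 hne
  set τ : S →₀ ℝ := Finsupp.indicator μ.support (fun s hs => u ⟨s, hs⟩) with hτ
  have hτ_apply : ∀ s : ↥μ.support, τ (s : S) = u s := by
    intro s
    rw [hτ, Finsupp.indicator_of_mem s.prop]
  have hτsupp : τ.support ⊆ μ.support := by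
    intro s hs
    by_contra hns
    have : τ s = 0 := by rw [hτ, Finsupp.indicator_of_notMem hns]
    exact (Finsupp.mem_support_iff.1 hs) this
  have key : ∀ i : Fin (m + 1), (τ.sum fun s p => p * c i s) = 0 := by
    intro i
    have h1 : (τ.sum fun s p => p * c i s) = ∑ s ∈ μ.support, τ s * c i s :=
      Finsupp.sum_of_support_subset _ hτsupp _ (by simp)
    have h2 : ∑ s ∈ μ.support, τ s * c i s = ∑ s : ↥μ.support, τ (s : S) * c i (s : S) :=
      (Finset.sum_coe_sort μ.support _).symm
    have h3 : ∑ s : ↥μ.support, τ (s : S) * c i (s : S) = L u i := by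
      apply Finset.sum_congr rfl
      intro s _
      rw [hτ_apply]
    rw [h1, h2, h3, hLu]
    rfl
  refine ⟨τ, ?_, hτsupp, ?_, ?_⟩
  · intro h0
    obtain ⟨s, hs⟩ := Function.ne_iff.1 hune
    apply hs
    have := hτ_apply s
    rw [h0] at this
    simpa using this.symm
  · have := key 0
    simpa [hc] using this
  · intro i
    have := key i.succ
    simpa [hc] using this

/-- One-sided support shrinking. -/
lemma stmt12.shrink {S : Type*} (μ τ : S →₀ ℝ) (hμ : ∀ s, 0 ≤ μ s)
    (hsupp : τ.support ⊆ μ.support) {s₀ : S} (hs₀ : τ s₀ < 0) :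
    ∃ t : ℝ, 0 < t ∧ (∀ s, 0 ≤ (μ + t • τ) s) ∧ (μ + t • τ).support ⊂ μ.support := by
  classical
  set N : Finset S := μ.support.filter (fun s => τ s < 0) with hN
  have hs₀N : s₀ ∈ N := by
    rw [hN, Finset.mem_filter]
    exact ⟨hsupp (Finsupp.mem_support_iff.2 hs₀.ne), hs₀⟩
  have hNne : N.Nonempty := ⟨s₀, hs₀N⟩
  have hpos : ∀ s ∈ N, 0 < μ s / (-τ s) := by
    intro s hs
    rw [hN, Finset.mem_filter] at hs
    have h1 : 0 < μ s := lt_of_le_of_ne (hμ s) (Ne.symm (Finsupp.mem_support_iff.1 hs.1))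
    have h2 : 0 < -τ s := by linarith [hs.2]
    positivity
  set t : ℝ := N.inf' hNne (fun s => μ s / (-τ s)) with ht
  have htpos : 0 < t := by
    rw [ht, Finset.lt_inf'_iff]
    exact hpos
  have happly : ∀ s, (μ + t • τ) s = μ s + t * τ s := by
    intro s; simp
  have hnonneg : ∀ s, 0 ≤ (μ + t • τ) s := by
    intro s
    rw [happly]
    rcases le_or_gt 0 (τ s) with hτs | hτs
    · have : 0 ≤ t * τ s := mul_nonneg htpos.le hτs
      linarith [hμ s]
    · have hsN : s ∈ N := by
        rw [hN, Finset.mem_filter]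
        exact ⟨hsupp (Finsupp.mem_support_iff.2 hτs.ne), hτs⟩
      have hle : t ≤ μ s / (-τ s) := Finset.inf'_le _ hsN
      have h2 : 0 < -τ s := by linarith
      rw [le_div_iff₀ h2] at hle
      nlinarith
  have hsub : (μ + t • τ).support ⊆ μ.support := by
    intro s hs
    by_contra hns
    have h1 : μ s = 0 := Finsupp.notMem_support_iff.1 hns
    have h2 : τ s = 0 := Finsupp.notMem_support_iff.1 (fun hc => hns (hsupp hc))
    have : (μ + t • τ) s = 0 := by rw [happly, h1, h2]; ring
    exact (Finsupp.mem_support_iff.1 hs) this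
  obtain ⟨s₁, hs₁N, hs₁⟩ := Finset.exists_mem_eq_inf' hNne (fun s => μ s / (-τ s))
  have hs₁N' := hs₁N
  rw [hN, Finset.mem_filter] at hs₁N'
  have hτs₁ : τ s₁ < 0 := hs₁N'.2
  have hval : (μ + t • τ) s₁ = 0 := by
    rw [happly, ht, hs₁]
    have hne : τ s₁ ≠ 0 := hτs₁.ne
    rw [div_mul_eq_mul_div, mul_div_assoc, div_neg, div_self hne]
    ring
  refine ⟨t, htpos, hnonneg, hsub, fun hcon => ?_⟩
  have : s₁ ∈ (μ + t • τ).support := hcon hs₁N'.1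
  exact (Finsupp.mem_support_iff.1 this) hval

/-- A measure in the constraint set with large support is a proper convex combination
of two measures (still satisfying the constraints termwise, via the shift by τ)
with strictly smaller support. -/
lemma stmt12.decomp {S : Type*} (m : ℕ) (h : Fin m → S → ℝ) (μ : S →₀ ℝ)
    (hpos : ∀ s, 0 ≤ μ s) (hcard : m + 1 < μ.support.card) :
    ∃ τ : S →₀ ℝ, ∃ t₁ t₂ α : ℝ,
      (τ.sum fun _ p => p) = 0 ∧ (∀ i : Fin m, (τ.sum fun s p => p * h i s) = 0) ∧
      α ∈ Set.Ioo (0 : ℝ) 1 ∧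
      μ = α • (μ + t₁ • τ) + (1 - α) • (μ + (-t₂) • τ) ∧
      (∀ s, 0 ≤ (μ + t₁ • τ) s) ∧ (∀ s, 0 ≤ (μ + (-t₂) • τ) s) ∧
      (μ + t₁ • τ).support.card < μ.support.card ∧
      (μ + (-t₂) • τ).support.card < μ.support.card := by
  classical
  obtain ⟨τ, hτne, hτsupp, hτsum, hτcon⟩ := stmt12.exists_rel m h μ hcard
  -- τ has a negative and a positive coordinate
  have hsum0 : ∑ s ∈ τ.support, τ s = 0 := hτsum
  obtain ⟨a, ha⟩ : ∃ a, τ a ≠ 0 := by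
    by_contra hc
    push_neg at hc
    exact hτne (Finsupp.ext hc)
  have haS : a ∈ τ.support := Finsupp.mem_support_iff.2 ha
  have hneg : ∃ s, τ s < 0 := by
    by_contra hc
    push_neg at hc
    have := (Finset.sum_eq_zero_iff_of_nonneg (fun s _ => hc s)).1 hsum0 a haS
    exact ha this
  have hposs : ∃ s, 0 < τ s := by
    by_contra hc
    push_neg at hc
    have := (Finset.sum_eq_zero_iff_of_nonpos (fun s _ => hc s)).1 hsum0 a haS
    exact ha this
  obtain ⟨sn, hsn⟩ := hneg
  obtain ⟨sp, hsp⟩ := hposs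
  obtain ⟨t₁, ht₁, hnn₁, hss₁⟩ := stmt12.shrink μ τ hpos hτsupp hsn
  have hτ'supp : (-τ).support ⊆ μ.support := by
    intro s hs
    apply hτsupp
    rwa [Finsupp.support_neg] at hs
  have hsp' : (-τ) sp < 0 := by simpa using hsp
  obtain ⟨t₂, ht₂, hnn₂, hss₂⟩ := stmt12.shrink μ (-τ) hpos hτ'supp hsp'
  have hrw : μ + t₂ • (-τ) = μ + (-t₂) • τ := by
    rw [smul_neg, neg_smul]
  rw [hrw] at hnn₂ hss₂
  set α : ℝ := t₂ / (t₁ + t₂) with hα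
  have hsum : 0 < t₁ + t₂ := by linarith
  have hαIoo : α ∈ Set.Ioo (0 : ℝ) 1 := by
    constructor
    · positivity
    · rw [hα, div_lt_one hsum]; linarith
  refine ⟨τ, t₁, t₂, α, hτsum, hτcon, hαIoo, ?_, hnn₁, hnn₂,
    Finset.card_lt_card hss₁, Finset.card_lt_card hss₂⟩
  ext s
  simp only [Finsupp.add_apply, Finsupp.smul_apply, smul_eq_mul]
  have hne : t₁ + t₂ ≠ 0 := hsum.ne'
  field_simp [hα]
  have hαt : α * (t₁ + t₂) = t₂ := by rw [hα]; exact div_mul_cancel₀ _ hne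
  linear_combination (-τ s) * hαt

theorem stmt12 {S : Type*} (m : ℕ) (h : Fin m → S → ℝ)
    (K : Set (S →₀ ℝ))
    (hK : K = {μ | (∀ s, 0 ≤ μ s) ∧ (μ.sum fun _ p => p) = 1 ∧
      ∀ i : Fin m, (μ.sum fun s p => p * h i s) = 0})
    (Kj : ℕ → Set (S →₀ ℝ))
    (hKj : ∀ j, Kj j = {μ ∈ K | μ.support.card ≤ j})
    (g : (S →₀ ℝ) → ℝ)
    (hg : ∀ μ ∈ K, ∀ ν ∈ K, ∀ α : ℝ, α ∈ Set.Ioo (0 : ℝ) 1 →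
      g (α • μ + (1 - α) • ν) ≤ max (g μ) (g ν)) :
    (⨆ μ ∈ K, (g μ : EReal)) = ⨆ μ ∈ Kj (m + 1), (g μ : EReal) := by
  classical
  have hKjK : Kj (m + 1) ⊆ K := by
    rw [hKj]; exact fun μ hμ => hμ.1
  -- main claim by induction on support size
  have claim : ∀ n : ℕ, ∀ μ ∈ K, μ.support.card ≤ n →
      (g μ : EReal) ≤ ⨆ ν ∈ Kj (m + 1), (g ν : EReal) := by
    intro n
    induction n with
    | zero =>
      intro μ hμ hcard
      have : μ ∈ Kj (m + 1) := by
        rw [hKj]; exact ⟨hμ, by omega⟩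
      exact le_iSup₂_of_le μ this le_rfl
    | succ n ih =>
      intro μ hμ hcard
      by_cases hsmall : μ.support.card ≤ m + 1
      · have : μ ∈ Kj (m + 1) := by
          rw [hKj]; exact ⟨hμ, hsmall⟩
        exact le_iSup₂_of_le μ this le_rfl
      · push_neg at hsmall
        have hμ' := hμ
        rw [hK] at hμ'
        obtain ⟨hpos, hone, hcon⟩ := hμ'
        obtain ⟨τ, t₁, t₂, α, hτsum, hτcon, hαIoo, hdecomp, hnn₁, hnn₂, hc₁, hc₂⟩ :=
          stmt12.decomp m h μ hpos hsmall
        set ν₁ : S →₀ ℝ := μ + t₁ • τ with hν₁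
        set ν₂ : S →₀ ℝ := μ + (-t₂) • τ with hν₂
        have hν₁K : ν₁ ∈ K := by
          rw [hK]
          refine ⟨hnn₁, ?_, ?_⟩
          · have := stmt12.sum_lin (fun _ => (1 : ℝ)) μ τ t₁
            simp only [mul_one] at this
            rw [hν₁, this, hone, hτsum]; ring
          · intro i
            have := stmt12.sum_lin (h i) μ τ t₁
            rw [hν₁, this, hcon i, hτcon i]; ring
        have hν₂K : ν₂ ∈ K := by
          rw [hK]
          refine ⟨hnn₂, ?_, ?_⟩
          · have := stmt12.sum_lin (fun _ => (1 : ℝ)) μ τ (-t₂)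
            simp only [mul_one] at this
            rw [hν₂, this, hone, hτsum]; ring
          · intro i
            have := stmt12.sum_lin (h i) μ τ (-t₂)
            rw [hν₂, this, hcon i, hτcon i]; ring
        have hgle : g μ ≤ max (g ν₁) (g ν₂) := by
          conv_lhs => rw [hdecomp]
          exact hg ν₁ hν₁K ν₂ hν₂K α hαIoo
        have h₁ : (g ν₁ : EReal) ≤ ⨆ ν ∈ Kj (m + 1), (g ν : EReal) :=
          ih ν₁ hν₁K (by omega)
        have h₂ : (g ν₂ : EReal) ≤ ⨆ ν ∈ Kj (m + 1), (g ν : EReal) :=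
          ih ν₂ hν₂K (by omega)
        calc (g μ : EReal) ≤ ((max (g ν₁) (g ν₂) : ℝ) : EReal) := by
              exact_mod_cast hgle
          _ = max ((g ν₁ : EReal)) ((g ν₂ : EReal)) := by
              rcases le_total (g ν₁) (g ν₂) with hle | hle
              · rw [max_eq_right hle, max_eq_right (by exact_mod_cast hle)]
              · rw [max_eq_left hle, max_eq_left (by exact_mod_cast hle)]
          _ ≤ ⨆ ν ∈ Kj (m + 1), (g ν : EReal) := max_le h₁ h₂
  apply le_antisymm
  · exact iSup₂_le fun μ hμ => claim μ.support.card μ hμ le_rfl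
  · exact iSup₂_le fun μ hμ => le_iSup₂_of_le μ (hKjK hμ) le_rfl
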